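/- arXiv:1310.3674 — 10 statements merged into one kernel-verified Lean document; each statement's English description precedes it below -/
import Mathlib

section
/- For every n ≥ 2, the (n+3)-ary Boolean relation R = { (x₁,…,xₙ,x,c₀,c₁) ∈ Bool^{n+3} | (x₁ ∨ ⋯ ∨ xₙ) ∧ (x → x₁ ∧ ⋯ ∧ xₙ) ∧ (c₀ = 0) ∧ (c₁ = 1) } is a weak base of the co-clone it generates (this co-clone is IS^n_{00} in Post's lattice): for every finite set Δ of Boolean relations with Pol(Δ) = Pol({R}) one has pPol(Δ) ⊆ pPol({R}). -/
/-- A Boolean relation of arity `k`: a set of `k`-tuples over `Bool`. -/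
abbrev BRel (k : ℕ) := Set (Fin k → Bool)

/-- A total `m`-ary Boolean operation `f` preserves a `k`-ary relation `R`. -/
def Preserves {m k : ℕ} (f : (Fin m → Bool) → Bool) (R : BRel k) : Prop :=
  ∀ ts : Fin m → Fin k → Bool, (∀ j, ts j ∈ R) → (fun i => f (fun j => ts j i)) ∈ R

/-- A partial `m`-ary Boolean operation (modelled with `Option Bool`; `none` =
undefined) preserves a `k`-ary relation `R`. -/
def PPreserves {m k : ℕ} (f : (Fin m → Bool) → Option Bool) (R : BRel k) : Prop :=
  ∀ ts : Fin m → Fin k → Bool, (∀ j, ts j ∈ R) →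
    ∀ u : Fin k → Bool, (∀ i, f (fun j => ts j i) = some (u i)) → u ∈ R

/-- The set of all (finitary, total) polymorphisms of a set of relations. -/
def Pol (Γ : Set (Σ k, BRel k)) : Set (Σ m, (Fin m → Bool) → Bool) :=
  { f | ∀ R ∈ Γ, Preserves f.2 R.2 }

/-- The set of all partial polymorphisms of a set of relations. -/
def pPol (Γ : Set (Σ k, BRel k)) : Set (Σ m, (Fin m → Bool) → Option Bool) :=
  { f | ∀ R ∈ Γ, PPreserves f.2 R.2 }

/-- `R` is a weak base of the co-clone it generates: every finite `Δ` with the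
same polymorphisms as `R` satisfies `pPol Δ ⊆ pPol {R}`. -/
def IsWeakBase {k : ℕ} (R : BRel k) : Prop :=
  ∀ Δ : Set (Σ k, BRel k), Δ.Finite →
    Pol Δ = Pol {⟨k, R⟩} → pPol Δ ⊆ pPol {⟨k, R⟩}

namespace WB

def xi (n : ℕ) (i : Fin n) : Fin (n+3) := Fin.castLE (Nat.le_add_right n 3) i
def xc (n : ℕ) : Fin (n+3) := ⟨n, Nat.lt_add_of_pos_right (Nat.succ_pos 2)⟩
def zc (n : ℕ) : Fin (n+3) := ⟨n+1, Nat.add_lt_add_left (show 1 < 3 from Nat.one_lt_succ_succ 1) n⟩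
def oc (n : ℕ) : Fin (n+3) := ⟨n+2, Nat.add_lt_add_left (show 2 < 3 from Nat.lt_succ_self 2) n⟩

def Rr (n : ℕ) : BRel (n+3) := { t | (∃ i : Fin n, t (xi n i) = true) ∧
  (t (xc n) = true → ∀ i : Fin n, t (xi n i) = true) ∧
  t (zc n) = false ∧ t (oc n) = true }

variable {n : ℕ}

lemma xi_ne_xc (i : Fin n) : xi n i ≠ xc n := by
  simp only [xi, xc, Fin.ext_iff, Fin.castLE, ne_eq]; omega
lemma xi_ne_zc (i : Fin n) : xi n i ≠ zc n := by
  simp only [xi, zc, Fin.ext_iff, Fin.castLE, ne_eq]; omega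
lemma xi_ne_oc (i : Fin n) : xi n i ≠ oc n := by
  simp only [xi, oc, Fin.ext_iff, Fin.castLE, ne_eq]; omega
lemma xc_ne_zc : xc n ≠ zc n := by
  simp only [xc, zc, Fin.ext_iff, ne_eq]; omega
lemma xc_ne_oc : xc n ≠ oc n := by
  simp only [xc, oc, Fin.ext_iff, ne_eq]; omega
lemma zc_ne_oc : zc n ≠ oc n := by
  simp only [zc, oc, Fin.ext_iff, ne_eq]; omega
lemma xi_inj {i j : Fin n} (h : xi n i = xi n j) : i = j := by
  simpa [xi, Fin.ext_iff, Fin.castLE] using h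

/-- the all-ones-except-c0 tuple is in R -/
lemma rtop_mem (hn : 2 ≤ n) : (fun c => decide (c ≠ zc n)) ∈ Rr n := by
  refine ⟨⟨⟨0, by omega⟩, by simp [xi_ne_zc]⟩, fun _ i => by simp [xi_ne_zc], by simp, by simp [(zc_ne_oc (n:=n)).symm]⟩

/-- OR over a nonempty index set preserves R -/
lemma presOR (S : Fin n → Bool) (hS : ∃ ℓ, S ℓ = true) :
    Preserves (fun x : Fin n → Bool => decide (∃ ℓ, S ℓ = true ∧ x ℓ = true)) (Rr n) := by
  intro ts hts
  obtain ⟨ℓ₀, hℓ₀⟩ := hS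
  obtain ⟨⟨i₀, hi₀⟩, himp, hz, ho⟩ := hts ℓ₀
  refine ⟨⟨i₀, ?_⟩, ?_, ?_, ?_⟩
  · simp only [decide_eq_true_eq]; exact ⟨ℓ₀, hℓ₀, hi₀⟩
  · intro hx i
    simp only [decide_eq_true_eq] at hx ⊢
    obtain ⟨ℓ, hSℓ, hℓ⟩ := hx
    exact ⟨ℓ, hSℓ, (hts ℓ).2.1 hℓ i⟩
  · simp only [decide_eq_false_iff_not]
    rintro ⟨ℓ, _, hℓ⟩
    rw [(hts ℓ).2.2.1] at hℓ; exact Bool.false_ne_true hℓ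
  · simp only [decide_eq_true_eq]
    exact ⟨ℓ₀, hℓ₀, (hts ℓ₀).2.2.2⟩

lemma presOR02 : Preserves (fun x : Fin 3 → Bool => x 0 || x 2) (Rr n) := by
  intro ts hts
  obtain ⟨⟨i₀, hi₀⟩, himp, hz, ho⟩ := hts 0
  refine ⟨⟨i₀, by simp [hi₀]⟩, ?_, ?_, ?_⟩
  · intro hx i
    simp only [Bool.or_eq_true] at hx ⊢
    rcases hx with h | h
    · exact Or.inl ((hts 0).2.1 h i)
    · exact Or.inr ((hts 2).2.1 h i)
  · simp [(hts 0).2.2.1, (hts 2).2.2.1]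
  · simp [(hts 0).2.2.2]

lemma presF13 : Preserves (fun x : Fin 3 → Bool => (x 0 && x 1) || x 2) (Rr n) := by
  intro ts hts
  obtain ⟨⟨i₀, hi₀⟩, himp, hz, ho⟩ := hts 2
  refine ⟨⟨i₀, by simp [hi₀]⟩, ?_, ?_, ?_⟩
  · intro hx i
    simp only [Bool.or_eq_true, Bool.and_eq_true] at hx ⊢
    rcases hx with ⟨h0, h1⟩ | h
    · exact Or.inl ⟨(hts 0).2.1 h0 i, (hts 1).2.1 h1 i⟩
    · exact Or.inr ((hts 2).2.1 h i)
  · simp [(hts 0).2.2.1, (hts 2).2.2.1]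
  · simp [(hts 2).2.2.2]


/-- weight at least two -/
def W (n : ℕ) (x : Fin n → Bool) : Bool :=
  decide (∃ ℓ₁ ℓ₂ : Fin n, ℓ₁ ≠ ℓ₂ ∧ x ℓ₁ = true ∧ x ℓ₂ = true)

/-- characteristic function of {e_ℓ} ∪ {weight ≥ 2} -/
def Fl (n : ℕ) (ℓ : Fin n) (x : Fin n → Bool) : Bool :=
  (x ℓ && decide (∀ ℓ', ℓ' ≠ ℓ → x ℓ' = false)) || W n x

lemma presFl (hn : 2 ≤ n) (ℓ : Fin n) : Preserves (Fl n ℓ) (Rr n) := by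
  intro ts hts
  obtain ⟨⟨i₀, hi₀⟩, himp, hz, ho⟩ := hts ℓ
  have key : ∀ c : Fin (n+3), ts ℓ c = true → Fl n ℓ (fun j => ts j c) = true := by
    intro c hc
    by_cases hW : W n (fun j => ts j c) = true
    · simp [Fl, hW]
    · simp only [Fl, Bool.or_eq_true, Bool.and_eq_true, decide_eq_true_eq]
      refine Or.inl ⟨hc, fun ℓ' hℓ' => ?_⟩
      by_contra h
      rw [Bool.not_eq_false] at h
      exact hW (by simp only [W, decide_eq_true_eq]; exact ⟨ℓ', ℓ, hℓ', h, hc⟩)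
  refine ⟨⟨i₀, key _ hi₀⟩, ?_, ?_, ?_⟩
  · intro hx i
    simp only [Fl, Bool.or_eq_true, Bool.and_eq_true, decide_eq_true_eq, W] at hx
    rcases hx with ⟨hc, _⟩ | ⟨ℓ₁, ℓ₂, h12, h1, h2⟩
    · exact key _ ((hts ℓ).2.1 hc i)
    · have g1 := (hts ℓ₁).2.1 h1 i
      have g2 := (hts ℓ₂).2.1 h2 i
      simp only [Fl, Bool.or_eq_true, W, decide_eq_true_eq]
      exact Or.inr ⟨ℓ₁, ℓ₂, h12, g1, g2⟩
  · have hcol : (fun j : Fin n => ts j (zc n)) = fun _ => false :=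
      funext fun j => (hts j).2.2.1
    show Fl n ℓ (fun j => ts j (zc n)) = false
    rw [hcol]; simp [Fl, W]
  · have hcol : (fun j : Fin n => ts j (oc n)) = fun _ => true :=
      funext fun j => (hts j).2.2.2
    show Fl n ℓ (fun j => ts j (oc n)) = true
    rw [hcol]
    simp only [Fl, Bool.or_eq_true, W, decide_eq_true_eq]
    exact Or.inr ⟨⟨0, by omega⟩, ⟨1, by omega⟩, by simp [Fin.ext_iff], trivial, trivial⟩

/-- W is not a polymorphism of R -/
lemma notPresW (hn : 2 ≤ n) : ¬ Preserves (W n) (Rr n) := by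
  intro h
  have hrows : ∀ ℓ : Fin n, (fun c => decide (c = xi n ℓ ∨ c = oc n)) ∈ Rr n := by
    intro ℓ
    refine ⟨⟨ℓ, by simp⟩, ?_, ?_, by simp⟩
    · intro hxx
      exfalso
      simp only [decide_eq_true_eq] at hxx
      rcases hxx with h1 | h1
      · exact (xi_ne_xc ℓ) h1.symm
      · exact xc_ne_oc h1
    · show decide _ = false
      simp only [decide_eq_false_iff_not, not_or]
      exact ⟨fun h1 => (xi_ne_zc ℓ) h1.symm, zc_ne_oc⟩
  have := h (fun ℓ => fun c => decide (c = xi n ℓ ∨ c = oc n)) hrows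
  obtain ⟨⟨i₀, hi₀⟩, _, _, _⟩ := this
  simp only [W, decide_eq_true_eq] at hi₀
  obtain ⟨ℓ₁, ℓ₂, h12, h1, h2⟩ := hi₀
  have e1 : i₀ = ℓ₁ := by
    rcases h1 with h | h
    · exact xi_inj h
    · exact absurd h (xi_ne_oc i₀)
  have e2 : i₀ = ℓ₂ := by
    rcases h2 with h | h
    · exact xi_inj h
    · exact absurd h (xi_ne_oc i₀)
  exact h12 (e1 ▸ e2 ▸ rfl)

/-- H = (x ∧ ¬y ∧ ¬z) ∨ z is not a polymorphism of R -/
def Hfn (x : Fin 3 → Bool) : Bool := (x 0 && !(x 1) && !(x 2)) || x 2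

lemma notPresH (hn : 2 ≤ n) : ¬ Preserves Hfn (Rr n) := by
  intro h
  have h0n : (0 : ℕ) < n := by omega
  have h1n : (1 : ℕ) < n := by omega
  have t1mem : (fun c => decide (c ≠ zc n)) ∈ Rr n := rtop_mem hn
  have t2mem : (fun c => decide (c ≠ zc n ∧ c ≠ xc n)) ∈ Rr n := by
    refine ⟨⟨⟨0, h0n⟩, by simp [xi_ne_zc, xi_ne_xc]⟩, ?_, by simp, ?_⟩
    · intro hxx
      simp only [decide_eq_true_eq] at hxx
      exact absurd rfl hxx.2
    · simp only [decide_eq_true_eq]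
      exact ⟨fun h1 => (zc_ne_oc (n := n)) h1.symm, fun h1 => (xc_ne_oc (n := n)) h1.symm⟩
  have t3mem : (fun c => decide (c ≠ zc n ∧ c ≠ xc n ∧ c ≠ xi n ⟨0, h0n⟩)) ∈ Rr n := by
    refine ⟨⟨⟨1, h1n⟩, ?_⟩, ?_, by simp, ?_⟩
    · simp only [decide_eq_true_eq]
      refine ⟨xi_ne_zc _, xi_ne_xc _, ?_⟩
      intro hcontra
      have := xi_inj hcontra
      simp [Fin.ext_iff] at this
    · intro hxx
      simp only [decide_eq_true_eq] at hxx
      exact absurd rfl hxx.2.1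
    · simp only [decide_eq_true_eq]
      exact ⟨fun h1 => (zc_ne_oc (n := n)) h1.symm, fun h1 => (xc_ne_oc (n := n)) h1.symm,
        fun h1 => (xi_ne_oc _) h1.symm⟩
  obtain ⟨_, himp, _, _⟩ := h
    ![fun c => decide (c ≠ zc n),
      fun c => decide (c ≠ zc n ∧ c ≠ xc n),
      fun c => decide (c ≠ zc n ∧ c ≠ xc n ∧ c ≠ xi n ⟨0, h0n⟩)]
    (by intro j; fin_cases j; exacts [t1mem, t2mem, t3mem])
  have key := himp (by
    simp [Hfn, xc_ne_zc, Matrix.cons_val_zero, Matrix.cons_val_one, Matrix.head_cons]) ⟨0, h0n⟩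
  simp [Hfn, xi_ne_zc, xi_ne_xc, Matrix.cons_val_zero, Matrix.cons_val_one,
    Matrix.head_cons] at key

lemma notPresConst1 (hn : 2 ≤ n) : ¬ Preserves (fun _ : Fin 1 → Bool => true) (Rr n) := by
  intro h
  obtain ⟨_, _, hz, _⟩ := h (fun _ => fun c => decide (c ≠ zc n)) (fun _ => rtop_mem hn)
  exact absurd hz (by simp)

lemma notPresConst0 (hn : 2 ≤ n) : ¬ Preserves (fun _ : Fin 1 → Bool => false) (Rr n) := by
  intro h
  obtain ⟨_, _, _, ho⟩ := h (fun _ => fun c => decide (c ≠ zc n)) (fun _ => rtop_mem hn)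
  exact Bool.false_ne_true ho

lemma notPresNeg (hn : 2 ≤ n) : ¬ Preserves (fun x : Fin 1 → Bool => !(x 0)) (Rr n) := by
  intro h
  obtain ⟨_, _, hz, _⟩ := h (fun _ => fun c => decide (c ≠ zc n)) (fun _ => rtop_mem hn)
  simp at hz


section extraction

variable {Δ : Set (Σ k, BRel k)}

lemma polOfPres (hpol : Pol Δ = Pol {⟨n+3, Rr n⟩}) {m : ℕ}
    {g : (Fin m → Bool) → Bool} (hg : Preserves g (Rr n)) :
    ∀ {kq : ℕ} (Q : BRel kq), ⟨kq, Q⟩ ∈ Δ → Preserves g Q := by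
  intro kq Q hQ
  have hmem : (⟨m, g⟩ : Σ m', (Fin m' → Bool) → Bool) ∈ Pol {⟨n+3, Rr n⟩} := by
    intro Rp hRp
    rw [Set.mem_singleton_iff] at hRp
    subst hRp
    exact hg
  rw [← hpol] at hmem
  exact hmem ⟨kq, Q⟩ hQ

lemma presR_of_polΔ (hpol : Pol Δ = Pol {⟨n+3, Rr n⟩}) {m : ℕ}
    {g : (Fin m → Bool) → Bool}
    (hmem : (⟨m, g⟩ : Σ m', (Fin m' → Bool) → Bool) ∈ Pol Δ) : Preserves g (Rr n) := by
  rw [hpol] at hmem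
  exact hmem ⟨n+3, Rr n⟩ rfl

lemma exC (hn : 2 ≤ n) (hpol : Pol Δ = Pol {⟨n+3, Rr n⟩}) :
    ∃ (kq : ℕ) (Q : BRel kq), ⟨kq, Q⟩ ∈ Δ ∧ ∃ s, s ∈ Q ∧ (fun _ => true) ∉ Q := by
  by_contra hcon
  push_neg at hcon
  have hmem : (⟨1, fun _ : Fin 1 → Bool => true⟩ : Σ m', (Fin m' → Bool) → Bool) ∈ Pol Δ := by
    rintro ⟨kq, Q⟩ hQ ts hts
    exact hcon kq Q hQ (ts 0) (hts 0)
  exact notPresConst1 hn (presR_of_polΔ hpol hmem)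

lemma exD (hn : 2 ≤ n) (hpol : Pol Δ = Pol {⟨n+3, Rr n⟩}) :
    ∃ (kq : ℕ) (Q : BRel kq), ⟨kq, Q⟩ ∈ Δ ∧ ∃ s, s ∈ Q ∧ (fun _ => false) ∉ Q := by
  by_contra hcon
  push_neg at hcon
  have hmem : (⟨1, fun _ : Fin 1 → Bool => false⟩ : Σ m', (Fin m' → Bool) → Bool) ∈ Pol Δ := by
    rintro ⟨kq, Q⟩ hQ ts hts
    exact hcon kq Q hQ (ts 0) (hts 0)
  exact notPresConst0 hn (presR_of_polΔ hpol hmem)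

lemma exE (hn : 2 ≤ n) (hpol : Pol Δ = Pol {⟨n+3, Rr n⟩}) :
    ∃ (kq : ℕ) (Q : BRel kq), ⟨kq, Q⟩ ∈ Δ ∧ ∃ s, s ∈ Q ∧ (fun i => !(s i)) ∉ Q := by
  by_contra hcon
  push_neg at hcon
  have hmem : (⟨1, fun x : Fin 1 → Bool => !(x 0)⟩ : Σ m', (Fin m' → Bool) → Bool) ∈ Pol Δ := by
    rintro ⟨kq, Q⟩ hQ ts hts
    exact hcon kq Q hQ (ts 0) (hts 0)
  exact notPresNeg hn (presR_of_polΔ hpol hmem)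

def labval (n : ℕ) : (Fin n ⊕ Bool) → Fin n → Bool
  | .inl ℓ₀, ℓ => decide (ℓ = ℓ₀)
  | .inr b, _ => b

def labAnd (n : ℕ) : (Fin n ⊕ Bool) → Bool
  | .inl _ => false
  | .inr b => b

lemma exA (hn : 2 ≤ n) (hpol : Pol Δ = Pol {⟨n+3, Rr n⟩}) :
    ∃ (kq : ℕ) (Q : BRel kq), ⟨kq, Q⟩ ∈ Δ ∧ ∃ lab : Fin kq → (Fin n ⊕ Bool),
      (∀ ℓ, (fun i => labval n (lab i) ℓ) ∈ Q) ∧ (fun i => labAnd n (lab i)) ∉ Q := by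
  by_contra hcon
  push_neg at hcon
  have hmem : (⟨n, W n⟩ : Σ m', (Fin m' → Bool) → Bool) ∈ Pol Δ := by
    rintro ⟨kq, Q⟩ hQ ts hts
    have hchoice : ∀ i : Fin kq, ∃ l : Fin n ⊕ Bool,
        (∀ ℓ, labval n l ℓ = Fl n ℓ (fun j => ts j i)) ∧
        labAnd n l = W n (fun j => ts j i) := by
      intro i
      by_cases hW : W n (fun j => ts j i) = true
      · exact ⟨.inr true, fun ℓ => by simp [labval, Fl, hW], by simp [labAnd, hW]⟩
      · have hWf : W n (fun j => ts j i) = false := Bool.eq_false_iff.mpr hW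
        by_cases hex : ∃ ℓ₀, ts ℓ₀ i = true
        · obtain ⟨ℓ₀, hℓ₀⟩ := hex
          have hothers : ∀ ℓ', ℓ' ≠ ℓ₀ → ts ℓ' i = false := by
            intro ℓ' hne
            by_contra hcontra
            rw [Bool.not_eq_false] at hcontra
            exact hW (by
              simp only [W, decide_eq_true_eq]
              exact ⟨ℓ', ℓ₀, hne, hcontra, hℓ₀⟩)
          refine ⟨.inl ℓ₀, fun ℓ => ?_, by simp [labAnd, hWf]⟩
          by_cases hℓ : ℓ = ℓ₀
          · subst hℓ
            have h2 : decide (∀ ℓ', ℓ' ≠ ℓ → ts ℓ' i = false) = true :=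
              decide_eq_true hothers
            simp [labval, Fl, hℓ₀, h2, hWf]
          · simp [labval, Fl, hℓ, hothers ℓ hℓ, hWf]
        · push_neg at hex
          have hxf : ∀ ℓ₀, ts ℓ₀ i = false := fun ℓ₀ => Bool.eq_false_iff.mpr (hex ℓ₀)
          exact ⟨.inr false, fun ℓ => by simp [labval, Fl, hxf ℓ, hWf],
            by simp [labAnd, hWf]⟩
    choose lab hlab using hchoice
    have hrows : ∀ ℓ, (fun i => labval n (lab i) ℓ) ∈ Q := by
      intro ℓ
      have hpres := polOfPres hpol (presFl hn ℓ) Q hQ ts hts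
      have heq : (fun i => labval n (lab i) ℓ) = (fun i => Fl n ℓ fun j => ts j i) :=
        funext fun i => (hlab i).1 ℓ
      rw [heq]
      exact hpres
    have hbad := hcon kq Q hQ lab hrows
    have heq : (fun i => labAnd n (lab i)) = (fun i => W n fun j => ts j i) :=
      funext fun i => (hlab i).2
    rw [heq] at hbad
    exact hbad
  exact notPresW hn (presR_of_polΔ hpol hmem)

lemma exB (hn : 2 ≤ n) (hpol : Pol Δ = Pol {⟨n+3, Rr n⟩}) :
    ∃ (kq : ℕ) (Q : BRel kq), ⟨kq, Q⟩ ∈ Δ ∧ ∃ c d : Fin kq → Bool,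
      (fun i => c i && d i) ∈ Q ∧ c ∈ Q ∧ (fun i => c i || d i) ∈ Q ∧ d ∉ Q := by
  by_contra hcon
  push_neg at hcon
  have hmem : (⟨3, Hfn⟩ : Σ m', (Fin m' → Bool) → Bool) ∈ Pol Δ := by
    rintro ⟨kq, Q⟩ hQ ts hts
    set c : Fin kq → Bool := fun i => (ts 0 i && ts 1 i) || ts 2 i with hc
    set d : Fin kq → Bool := fun i => Hfn (fun j => ts j i) with hd
    have hcd : (fun i => c i && d i) = ts 2 := by
      funext i
      simp only [hc, hd, Hfn]
      cases h0 : ts 0 i <;> cases h1 : ts 1 i <;> cases h2 : ts 2 i <;> rfl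
    have hcQ : c ∈ Q := by
      have := polOfPres hpol (presF13 (n := n)) Q hQ ts hts
      exact this
    have hcdQ : (fun i => c i || d i) ∈ Q := by
      have hp := polOfPres hpol (presOR02 (n := n)) Q hQ ts hts
      have heq : (fun i => c i || d i) = (fun i => ts 0 i || ts 2 i) := by
        funext i
        simp only [hc, hd, Hfn]
        cases h0 : ts 0 i <;> cases h1 : ts 1 i <;> cases h2 : ts 2 i <;> rfl
      rw [heq]
      exact hp
    have hAndQ : (fun i => c i && d i) ∈ Q := by rw [hcd]; exact hts 2
    exact hcon kq Q hQ c d hAndQ hcQ hcdQ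
  exact notPresH hn (presR_of_polΔ hpol hmem)

end extraction

theorem main (n : ℕ) (hn : 2 ≤ n) : IsWeakBase (Rr n) := by
  intro Δ hfin hpol fp hfp
  obtain ⟨m, f⟩ := fp
  intro Rp hRp
  rw [Set.mem_singleton_iff] at hRp
  subst hRp
  intro ts hts u hu
  -- Step 1 : the two constant coordinates of u
  have hstep1 : u (zc n) = false ∧ u (oc n) = true := by
    have core : ∀ (kq : ℕ) (Q : BRel kq), ⟨kq, Q⟩ ∈ Δ → ∀ s : Fin kq → Bool, s ∈ Q →
        (fun i => u (if s i = true then oc n else zc n)) ∈ Q := by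
      intro kq Q hQ s hs
      have hfQ := hfp ⟨kq, Q⟩ hQ
      have hrow : ∀ j, (fun i => ts j (if s i = true then oc n else zc n)) ∈ Q := by
        intro j
        have heq : (fun i => ts j (if s i = true then oc n else zc n)) = s := by
          funext i
          cases hsi : s i
          · simp only [hsi, Bool.false_eq_true, if_false]
            exact (hts j).2.2.1
          · simp only [hsi, if_true]
            exact (hts j).2.2.2
        rw [heq]; exact hs
      exact hfQ (fun j i => ts j (if s i = true then oc n else zc n)) hrow
        (fun i => u (if s i = true then oc n else zc n)) (fun i => hu _)
    cases hz : u (zc n) <;> cases ho : u (oc n)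
    · exfalso
      obtain ⟨kq, Q, hQ, s, hs, hbad⟩ := exD hn hpol
      have := core kq Q hQ s hs
      have heq : (fun i => u (if s i = true then oc n else zc n)) = (fun _ => false) := by
        funext i; cases hsi : s i <;> simp [hsi, hz, ho]
      rw [heq] at this; exact hbad this
    · exact ⟨rfl, rfl⟩
    · exfalso
      obtain ⟨kq, Q, hQ, s, hs, hbad⟩ := exE hn hpol
      have := core kq Q hQ s hs
      have heq : (fun i => u (if s i = true then oc n else zc n)) = (fun i => !(s i)) := by
        funext i; cases hsi : s i <;> simp [hsi, hz, ho]
      rw [heq] at this; exact hbad this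
    · exfalso
      obtain ⟨kq, Q, hQ, s, hs, hbad⟩ := exC hn hpol
      have := core kq Q hQ s hs
      have heq : (fun i => u (if s i = true then oc n else zc n)) = (fun _ => true) := by
        funext i; cases hsi : s i <;> simp [hsi, hz, ho]
      rw [heq] at this; exact hbad this
  obtain ⟨huz, huo⟩ := hstep1
  -- Step 2 : existential part
  have hstep2 : ∃ i : Fin n, u (xi n i) = true := by
    by_contra hall
    push_neg at hall
    have hallf : ∀ i : Fin n, u (xi n i) = false := fun i => Bool.eq_false_iff.mpr (hall i)
    obtain ⟨kq, Q, hQ, lab, hrows, hbad⟩ := exA hn hpol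
    have hτ : ∀ i : Fin kq, Fin (n+3) := fun i =>
      Sum.elim (fun ℓ => xi n ℓ) (fun b => if b then oc n else zc n) (lab i)
    set τ : Fin kq → Fin (n+3) := fun i =>
      Sum.elim (fun ℓ => xi n ℓ) (fun b => if b then oc n else zc n) (lab i) with hτdef
    have hfQ := hfp ⟨kq, Q⟩ hQ
    have hrowmem : ∀ j, (fun i => ts j (τ i)) ∈ Q := by
      intro j
      obtain ⟨⟨i₀, hi₀⟩, himp, hzj, hoj⟩ := hts j
      have hORpres := polOfPres hpol (presOR (fun ℓ => ts j (xi n ℓ)) ⟨i₀, hi₀⟩) Q hQ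
      have happ := hORpres (fun ℓ => fun i => labval n (lab i) ℓ) hrows
      have heq : (fun i => decide (∃ ℓ, ts j (xi n ℓ) = true ∧ labval n (lab i) ℓ = true))
          = (fun i => ts j (τ i)) := by
        funext i
        rcases hl : lab i with ℓ₀ | b
        · simp only [hτdef, hl, Sum.elim_inl, labval]
          cases hv : ts j (xi n ℓ₀)
          · apply decide_eq_false
            rintro ⟨ℓ, h1, h2⟩
            rw [decide_eq_true_eq] at h2
            subst h2
            rw [hv] at h1
            exact Bool.false_ne_true h1
          · apply decide_eq_true
            exact ⟨ℓ₀, hv, by simp⟩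
        · cases b
          · simp only [hτdef, hl, Sum.elim_inr, labval]
            rw [if_neg (by simp), hzj]
            simp
          · simp only [hτdef, hl, Sum.elim_inr, labval]
            rw [if_pos trivial, hoj]
            apply decide_eq_true
            exact ⟨i₀, hi₀, trivial⟩
      rw [heq] at happ
      exact happ
    have hconc := hfQ (fun j i => ts j (τ i)) hrowmem (fun i => u (τ i)) (fun i => hu (τ i))
    have heqbad : (fun i => u (τ i)) = (fun i => labAnd n (lab i)) := by
      funext i
      rcases hl : lab i with ℓ₀ | b
      · simp only [hτdef, hl, Sum.elim_inl, labAnd]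
        exact hallf ℓ₀
      · cases b
        · simp only [hτdef, hl, Sum.elim_inr, labAnd]
          rw [if_neg (by simp)]
          exact huz
        · simp only [hτdef, hl, Sum.elim_inr, labAnd]
          rw [if_pos trivial]
          exact huo
    rw [heqbad] at hconc
    exact hbad hconc
  -- Step 3 : implication part
  have hstep3 : u (xc n) = true → ∀ i₀ : Fin n, u (xi n i₀) = true := by
    intro hx i₀
    by_contra hbad0
    have hbadf : u (xi n i₀) = false := Bool.eq_false_iff.mpr hbad0
    obtain ⟨kq, Q, hQ, c, d, hAndQ, hcQ, hOrQ, hdQ⟩ := exB hn hpol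
    set τ : Fin kq → Fin (n+3) := fun i =>
      if c i = true then (if d i = true then oc n else xi n i₀)
      else (if d i = true then xc n else zc n) with hτdef
    have hfQ := hfp ⟨kq, Q⟩ hQ
    have hrowmem : ∀ j, (fun i => ts j (τ i)) ∈ Q := by
      intro j
      obtain ⟨hex, himp, hzj, hoj⟩ := hts j
      cases hv0 : ts j (xi n i₀)
      · have hvx : ts j (xc n) = false := by
          cases hvx : ts j (xc n)
          · rfl
          · rw [himp hvx i₀] at hv0
            exact absurd hv0 (by simp)
        have heq : (fun i => ts j (τ i)) = (fun i => c i && d i) := by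
          funext i
          simp only [hτdef]
          cases hci : c i <;> cases hdi : d i <;>
            simp [hci, hdi, hv0, hvx, hzj, hoj]
        rw [heq]; exact hAndQ
      · cases hvx : ts j (xc n)
        · have heq : (fun i => ts j (τ i)) = c := by
            funext i
            simp only [hτdef]
            cases hci : c i <;> cases hdi : d i <;>
              simp [hci, hdi, hv0, hvx, hzj, hoj]
          rw [heq]; exact hcQ
        · have heq : (fun i => ts j (τ i)) = (fun i => c i || d i) := by
            funext i
            simp only [hτdef]
            cases hci : c i <;> cases hdi : d i <;>
              simp [hci, hdi, hv0, hvx, hzj, hoj]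
          rw [heq]; exact hOrQ
    have hconc := hfQ (fun j i => ts j (τ i)) hrowmem (fun i => u (τ i)) (fun i => hu (τ i))
    have heqbad : (fun i => u (τ i)) = d := by
      funext i
      simp only [hτdef]
      cases hci : c i <;> cases hdi : d i <;>
        simp [hci, hdi, huz, huo, hx, hbadf]
    rw [heqbad] at hconc
    exact hdQ hconc
  exact ⟨hstep2, hstep3, huz, huo⟩

end WB

theorem stmt4 (n : ℕ) (hn : 2 ≤ n) :
    IsWeakBase { t : Fin (n + 3) → Bool |
      (∃ i : Fin n, t (Fin.castLE (by omega) i) = true) ∧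
      (t ⟨n, by omega⟩ = true → ∀ i : Fin n, t (Fin.castLE (by omega) i) = true) ∧
      t ⟨n + 1, by omega⟩ = false ∧ t ⟨n + 2, by omega⟩ = true } :=
  WB.main n hn
end

section
/- For every n ≥ 2, the (n+1)-ary Boolean relation R = { (x₁,…,xₙ,c₁) ∈ Bool^{n+1} | (x₁ ∨ ⋯ ∨ xₙ) ∧ (c₁ = 1) } is a weak base of the co-clone it generates (this co-clone is IS^n_{0} in Post's lattice): for every finite set Δ of Boolean relations with Pol(Δ) = Pol({R}) one has pPol(Δ) ⊆ pPol({R}). -/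
/- ------------------ auxiliary development ------------------- -/

def chi (n : ℕ) (i : Fin n) : Fin n → Bool := fun j => decide (j = i)

def Rset (n : ℕ) : BRel (n + 1) :=
  { t | (∃ i : Fin n, t (Fin.castSucc i) = true) ∧ t (Fin.last n) = true }

noncomputable def iota (n : ℕ) (a : Fin n → Bool) : Fin (n + 1) :=
  if h : ∃ i : Fin n, a = chi n i then Fin.castSucc h.choose else Fin.last n

lemma chi_injective (n : ℕ) : Function.Injective (chi n) := by
  intro i i' h
  have h2 : chi n i i = chi n i' i := congrFun h i
  simp [chi] at h2
  exact h2

lemma iota_chi {n : ℕ} (i : Fin n) : iota n (chi n i) = Fin.castSucc i := by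
  have h : ∃ i' : Fin n, chi n i = chi n i' := ⟨i, rfl⟩
  rw [iota, dif_pos h]
  congr 1
  exact (chi_injective n h.choose_spec).symm

lemma iota_not_chi {n : ℕ} {a : Fin n → Bool} (h : ∀ i, a ≠ chi n i) :
    iota n a = Fin.last n := by
  rw [iota, dif_neg]
  push_neg
  exact h

lemma ones_ne_chi {n : ℕ} (hn : 2 ≤ n) (i : Fin n) :
    (fun _ : Fin n => true) ≠ chi n i := by
  intro h
  obtain ⟨j, hj⟩ := Fintype.exists_ne_of_one_lt_card (by simp; omega) i
  have h2 : true = chi n i j := congrFun h j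
  simp [chi, hj] at h2

lemma iota_ones {n : ℕ} (hn : 2 ≤ n) : iota n (fun _ => true) = Fin.last n :=
  iota_not_chi (ones_ne_chi hn)

lemma L1 {n : ℕ} (hn : 2 ≤ n) {r : Fin (n + 1) → Bool} (hr : r ∈ Rset n) :
    Preserves (fun a => r (iota n a)) (Rset n) := by
  intro ts hts
  refine ⟨?_, ?_⟩
  · by_cases hc : ∀ i : Fin n, ∃ l : Fin n, (fun j => ts j (Fin.castSucc i)) = chi n l
    · choose σ hσ using hc
      have hsurj : Function.Surjective σ := by
        intro j
        obtain ⟨i, hi⟩ := (hts j).1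
        refine ⟨i, ?_⟩
        have h2 : ts j (Fin.castSucc i) = chi n (σ i) j := congrFun (hσ i) j
        rw [hi] at h2
        simp [chi] at h2
        exact h2.symm
      obtain ⟨l, hl⟩ := hr.1
      obtain ⟨i, rfl⟩ := hsurj l
      refine ⟨i, ?_⟩
      show r (iota n (fun j => ts j (Fin.castSucc i))) = true
      rw [hσ i, iota_chi]
      exact hl
    · push_neg at hc
      obtain ⟨i, hi⟩ := hc
      refine ⟨i, ?_⟩
      show r (iota n (fun j => ts j (Fin.castSucc i))) = true
      rw [iota_not_chi hi]
      exact hr.2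
  · show r (iota n (fun j => ts j (Fin.last n))) = true
    have h2 : (fun j => ts j (Fin.last n)) = (fun _ => true) :=
      funext fun j => (hts j).2
    rw [h2, iota_ones hn]
    exact hr.2

lemma main_wb (n : ℕ) (hn : 2 ≤ n) : IsWeakBase (Rset n) := by
  intro Δ _ hPol f hf R' hR'
  rw [Set.mem_singleton_iff] at hR'
  subst hR'
  intro ts hts u hu
  have hg : (⟨n, fun a => u (iota n a)⟩ : Σ m, (Fin m → Bool) → Bool) ∈ Pol Δ := by
    intro S hS bs hbs
    refine hf S hS (fun j i => ts j (iota n (fun j' => bs j' i)))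
      (fun j => ?_)
      (fun i => u (iota n (fun j' => bs j' i)))
      (fun i => hu (iota n (fun j' => bs j' i)))
    have h1 : (⟨n, fun a => ts j (iota n a)⟩ : Σ m, (Fin m → Bool) → Bool) ∈ Pol Δ := by
      rw [hPol]
      intro T hT
      rw [Set.mem_singleton_iff] at hT
      subst hT
      exact L1 hn (hts j)
    exact h1 S hS bs hbs
  rw [hPol] at hg
  have h3 := hg ⟨n + 1, Rset n⟩ rfl
  have h4 := h3 (fun j i => (decide (i.val = j.val) || decide (i.val = n)))
    (fun j => ⟨⟨j, by simp⟩, by simp⟩)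
  have heq : (fun i : Fin (n + 1) =>
      u (iota n (fun j : Fin n => (decide (i.val = j.val) || decide (i.val = n))))) = u := by
    funext i
    by_cases hi : i.val = n
    · have hcol : (fun j : Fin n => (decide (i.val = j.val) || decide (i.val = n)))
          = fun _ => true := by
        funext j; simp [hi]
      have hieq : i = Fin.last n := Fin.ext hi
      rw [hcol, iota_ones hn, ← hieq]
    · have hlt : i.val < n := by have := i.isLt; omega
      have hcol : (fun j : Fin n => (decide (i.val = j.val) || decide (i.val = n)))
          = chi n ⟨i.val, hlt⟩ := by
        funext j; simp [chi, hi, Fin.ext_iff, eq_comm]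
      rw [hcol, iota_chi]
      exact congrArg u (Fin.ext rfl)
  rw [heq] at h4
  exact h4

theorem stmt5 (n : ℕ) (hn : 2 ≤ n) :
    IsWeakBase { t : Fin (n + 1) → Bool |
      (∃ i : Fin n, t (Fin.castLE (by omega) i) = true) ∧
      t ⟨n, by omega⟩ = true } := by
  exact main_wb n hn
end

section
/- The binary Boolean relation R = { (0,1) } ⊆ Bool² (i.e., the relation F(c₀) ∧ T(c₁) fixing its first argument to 0 and its second argument to 1) is a weak base of the co-clone it generates (this co-clone is IR₂ in Post's lattice): for every finite set Δ of Boolean relations with Pol(Δ) = Pol({R}) one has pPol(Δ) ⊆ pPol({R}). -/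
theorem stmt11 :
    IsWeakBase { t : Fin 2 → Bool | t 0 = false ∧ t 1 = true } := by
  intro Δ _ hPol f hf R hR ts hts u hu
  simp only [Set.mem_singleton_iff] at hR
  subst hR
  have hc0 : (fun j => ts j 0) = fun _ => false := funext fun j => (hts j).1
  have hc1 : (fun j => ts j 1) = fun _ => true := funext fun j => (hts j).2
  have h0 : f.2 (fun _ => false) = some (u 0) := by rw [← hc0]; exact hu 0
  have h1 : f.2 (fun _ => true) = some (u 1) := by rw [← hc1]; exact hu 1
  -- the unary total operation sending `false ↦ u 0` and `true ↦ u 1`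
  set g : (Fin 1 → Bool) → Bool := fun x => if x 0 then u 1 else u 0 with hg
  have hgPol : (⟨1, g⟩ : Σ m, (Fin m → Bool) → Bool) ∈ Pol Δ := by
    intro S hS ts' hts'
    have key := hf S hS (fun _ => ts' 0) (fun _ => hts' 0)
      (fun i => if ts' 0 i then u 1 else u 0)
      (fun i => by
        by_cases h : ts' 0 i = true
        · simp only [h, if_true]; exact h1
        · simp only [eq_false_of_ne_true h, if_false]; exact h0)
    convert key using 1
  rw [hPol] at hgPol
  have hgR := hgPol ⟨2, { t : Fin 2 → Bool | t 0 = false ∧ t 1 = true }⟩ rfl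
    (fun _ => ![false, true]) (fun _ => by constructor <;> rfl)
  obtain ⟨e0, e1⟩ := hgR
  simp only [hg, Matrix.cons_val_zero, Matrix.cons_val_one, Matrix.head_cons,
    if_true, if_false, Bool.false_eq_true] at e0 e1
  exact ⟨e0, e1⟩
end

section
/- The binary Boolean implication relation R = { (0,0), (0,1), (1,1) } ⊆ Bool² (i.e., { (x₁,x₂) | x₁ → x₂ }) is a weak base of the co-clone it generates (this co-clone is IM in Post's lattice): for every finite set Δ of Boolean relations with Pol(Δ) = Pol({R}) one has pPol(Δ) ⊆ pPol({R}). -/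
theorem stmt12 :
    IsWeakBase { t : Fin 2 → Bool | t 0 = true → t 1 = true } := by
  intro Δ _hfin hPol f hf
  set R : BRel 2 := { t : Fin 2 → Bool | t 0 = true → t 1 = true } with hRdef
  -- Every S ∈ Δ contains both constant tuples (via 0-ary polymorphisms of R).
  have hconst : ∀ c : Bool, ∀ S ∈ Δ, (fun _ => c) ∈ S.2 := by
    intro c S hS
    have h0 : (⟨0, fun _ => c⟩ : Σ m, (Fin m → Bool) → Bool) ∈ Pol {⟨2, R⟩} := by
      intro T hT
      simp only [Set.mem_singleton_iff] at hT
      subst hT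
      intro ts _
      intro h
      exact h
    rw [← hPol] at h0
    have := h0 S hS (fun j => (j.elim0)) (fun j => j.elim0)
    exact this
  by_cases hneg : ∀ S ∈ Δ, ∀ v ∈ S.2, (fun i => ! v i) ∈ S.2
  · -- then negation is a polymorphism of Δ = polymorphism of R: contradiction
    exfalso
    have hmem : (⟨1, fun x => ! x 0⟩ : Σ m, (Fin m → Bool) → Bool) ∈ Pol Δ := by
      intro S hS ts hts
      exact hneg S hS (ts 0) (hts 0)
    rw [hPol] at hmem
    have h := hmem ⟨2, R⟩ rfl (fun _ => ![false, true])
      (by intro _; show (false = true → true = true); simp)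
    have h' : (fun i => !(![false, true] i)) ∈ R := h
    have h'' := h' (by simp)
    simp at h''
  · push_neg at hneg
    obtain ⟨S, hS, v, hv, hnv⟩ := hneg
    intro T hT
    simp only [Set.mem_singleton_iff] at hT
    subst hT
    intro ts hts u hu
    show u 0 = true → u 1 = true
    intro h0
    by_contra h1
    have h1' : u 1 = false := by simpa using h1
    have key := hf S hS (fun j i => if v i then ts j 1 else ts j 0) ?_ (fun i => ! v i) ?_
    · exact hnv key
    · intro j
      have hj : ts j 0 = true → ts j 1 = true := hts j
      show (fun i => if v i then ts j 1 else ts j 0) ∈ S.2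
      rcases Bool.dichotomy (ts j 0) with hj0 | hj0 <;>
        rcases Bool.dichotomy (ts j 1) with hj1 | hj1
      · have he : (fun i => if v i then ts j 1 else ts j 0) = (fun _ => false) := by
          funext i; rw [hj0, hj1]; simp
        rw [he]; exact hconst false S hS
      · have he : (fun i => if v i then ts j 1 else ts j 0) = v := by
          funext i; rw [hj0, hj1]; cases v i <;> simp
        rw [he]; exact hv
      · rw [hj hj0] at hj1; exact absurd hj1 (by simp)
      · have he : (fun i => if v i then ts j 1 else ts j 0) = (fun _ => true) := by
          funext i; rw [hj0, hj1]; simp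
        rw [he]; exact hconst true S hS
    · intro i
      show f.2 (fun j => if v i then ts j 1 else ts j 0) = some (! v i)
      rcases Bool.dichotomy (v i) with hvi | hvi
      · have he : (fun j => if v i then ts j 1 else ts j 0) = (fun j => ts j 0) := by
          funext j; rw [hvi]; simp
        rw [he, hu 0, h0, hvi]; rfl
      · have he : (fun j => if v i then ts j 1 else ts j 0) = (fun j => ts j 1) := by
          funext j; rw [hvi]; simp
        rw [he, hu 1, h1', hvi]; rfl
end

section
/- The 4-ary Boolean relation R = { (x₁,x₂,c₀,c₁) ∈ Bool⁴ | (x₁ → x₂) ∧ (c₀ = 0) ∧ (c₁ = 1) } = { (0,0,0,1), (0,1,0,1), (1,1,0,1) } is a weak base of the co-clone it generates (this co-clone is IM₂ in Post's lattice): for every finite set Δ of Boolean relations with Pol(Δ) = Pol({R}) one has pPol(Δ) ⊆ pPol({R}). -/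
theorem stmt13 :
    IsWeakBase { t : Fin 4 → Bool |
      (t 0 = true → t 1 = true) ∧ t 2 = false ∧ t 3 = true } := by
  set R : BRel 4 := { t : Fin 4 → Bool |
      (t 0 = true → t 1 = true) ∧ t 2 = false ∧ t 3 = true } with hRdef
  intro Δ _hfin hpol f hfΔ S hS
  rw [Set.mem_singleton_iff] at hS
  subst hS
  intro ts hts u hu
  -- basic facts about the rows
  have hts0 : ∀ j, ts j 0 = true → ts j 1 = true := fun j => (hts j).1
  have hts2 : ∀ j, ts j 2 = false := fun j => (hts j).2.1
  have hts3 : ∀ j, ts j 3 = true := fun j => (hts j).2.2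
  -- transfer of counterexamples: any total op violating R violates some S ∈ Δ
  have key : ∀ (n : ℕ) (h : (Fin n → Bool) → Bool), ¬ Preserves h R →
      ∃ S ∈ Δ, ∃ ts' : Fin n → Fin S.1 → Bool,
        (∀ j, ts' j ∈ S.2) ∧ (fun i => h (fun j => ts' j i)) ∉ S.2 := by
    intro n h hh
    have hmem : (⟨n, h⟩ : Σ m, (Fin m → Bool) → Bool) ∉ Pol Δ := by
      rw [hpol]
      intro hmem
      exact hh (hmem ⟨4, R⟩ rfl)
    simp only [Pol, Set.mem_setOf_eq, not_forall] at hmem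
    obtain ⟨S, hS, hnp⟩ := hmem
    refine ⟨S, hS, ?_⟩
    simp only [Preserves, not_forall] at hnp
    obtain ⟨ts', h1, h2⟩ := hnp
    exact ⟨ts', h1, h2⟩
  -- total ops preserving R preserve every S ∈ Δ
  have mono : ∀ (n : ℕ) (g : (Fin n → Bool) → Bool), Preserves g R →
      ∀ S ∈ Δ, Preserves g S.2 := by
    intro n g hg S hS
    have hmem : (⟨n, g⟩ : Σ m, (Fin m → Bool) → Bool) ∈ Pol Δ := by
      rw [hpol]
      intro R' hR'
      rw [Set.mem_singleton_iff] at hR'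
      subst hR'
      exact hg
    exact hmem S hS
  have hcol2 : (fun j : Fin f.1 => ts j 2) = fun _ => false := funext hts2
  have hcol3 : (fun j : Fin f.1 => ts j 3) = fun _ => true := funext hts3
  have hu2 : f.2 (fun _ => false) = some (u 2) := by rw [← hcol2]; exact hu 2
  have hu3 : f.2 (fun _ => true) = some (u 3) := by rw [← hcol3]; exact hu 3
  -- Step 1: u 2 = false ∧ u 3 = true
  have h23 : u 2 = false ∧ u 3 = true := by
    by_contra hcon
    have hnp : ¬ Preserves (fun v : Fin 1 → Bool => if v 0 then u 3 else u 2) R := by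
      intro hp
      have hmem := hp (fun _ => ![false, false, false, true]) (by
        intro j
        simp only [hRdef, Set.mem_setOf_eq]
        decide)
      simp only [hRdef, Set.mem_setOf_eq] at hmem
      simp only [Matrix.cons_val_zero, Matrix.cons_val_one, Matrix.head_cons,
        Matrix.cons_val_two, Matrix.tail_cons, Matrix.cons_val_three] at hmem
      -- hmem gives u 2 = false and u 3 = true
      exact hcon ⟨by simpa using hmem.2.1, by simpa using hmem.2.2⟩
    obtain ⟨S, hSΔ, ts', hrows, hres⟩ := key 1 _ hnp
    apply hres
    apply hfΔ S hSΔ (fun _ => ts' 0) (fun _ => hrows 0)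
    intro i
    show f.2 (fun _ => ts' 0 i) = some (if ts' 0 i then u 3 else u 2)
    cases hci : ts' 0 i with
    | false => simpa [hci] using hu2
    | true => simpa [hci] using hu3
  refine ⟨?_, h23.1, h23.2⟩
  -- Step 2: monotonicity, u 0 = true → u 1 = true
  intro h0
  by_contra h1ne
  have h1f : u 1 = false := by simpa using h1ne
  -- counterexample to the non-monotone op (x ∧ ¬y) ∨ z on R
  have hnp3 : ¬ Preserves (fun v : Fin 3 → Bool => (v 0 && !v 1) || v 2) R := by
    intro hp
    have hmem := hp ![![true,true,false,true], ![false,true,false,true],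
        ![false,false,false,true]] (by
      intro j
      fin_cases j <;> (simp only [hRdef, Set.mem_setOf_eq]; decide))
    simp only [hRdef, Set.mem_setOf_eq] at hmem
    revert hmem
    decide
  obtain ⟨S, hSΔ, ts', hrows, hres⟩ := key 3 _ hnp3
  apply hres
  -- the transformed rows (all still in S)
  set ρ : Fin f.1 → Fin S.1 → Bool := fun j i =>
    ((ts' 0 i || ts' 1 i || ts' 2 i) && ts j 0) || ((ts' 1 i || ts' 2 i) && ts j 1)
      || ts' 2 i with hρdef
  have hρ : ∀ j, ρ j ∈ S.2 := by
    intro j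
    have hΦ : Preserves (fun v : Fin 3 → Bool =>
        ((v 0 || v 1 || v 2) && ts j 0) || ((v 1 || v 2) && ts j 1) || v 2) R := by
      intro q hq
      refine ⟨?_, ?_, ?_⟩
      · show (((q 0 0 || q 1 0 || q 2 0) && ts j 0) || ((q 1 0 || q 2 0) && ts j 1)
            || q 2 0) = true →
          (((q 0 1 || q 1 1 || q 2 1) && ts j 0) || ((q 1 1 || q 2 1) && ts j 1)
            || q 2 1) = true
        have e0 := (hq 0).1
        have e1 := (hq 1).1
        have e2 := (hq 2).1
        simp only [Bool.or_eq_true, Bool.and_eq_true]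
        tauto
      · show (((q 0 2 || q 1 2 || q 2 2) && ts j 0) || ((q 1 2 || q 2 2) && ts j 1)
            || q 2 2) = false
        rw [(hq 0).2.1, (hq 1).2.1, (hq 2).2.1]
        simp
      · show (((q 0 3 || q 1 3 || q 2 3) && ts j 0) || ((q 1 3 || q 2 3) && ts j 1)
            || q 2 3) = true
        rw [(hq 2).2.2]
        simp
    exact mono 3 _ hΦ S hSΔ ts' hrows
  apply hfΔ S hSΔ ρ hρ
  intro i
  show f.2 (fun j => ρ j i) = some ((ts' 0 i && !ts' 1 i) || ts' 2 i)
  cases h2i : ts' 2 i with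
  | true =>
    have hc : (fun j => ρ j i) = fun j => ts j 3 := by
      funext j
      simp [hρdef, h2i, hts3 j]
    rw [hc, hu 3, h23.2]
    simp
  | false =>
    cases h1i : ts' 1 i with
    | true =>
      have hc : (fun j => ρ j i) = fun j => ts j 1 := by
        funext j
        cases hj : ts j 0 with
        | false => simp [hρdef, h2i, h1i, hj]
        | true => simp [hρdef, h2i, h1i, hj, hts0 j hj]
      rw [hc, hu 1, h1f]
      simp [h1i]
    | false =>
      cases h0i : ts' 0 i with
      | true =>
        have hc : (fun j => ρ j i) = fun j => ts j 0 := by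
          funext j
          simp [hρdef, h2i, h1i, h0i]
        rw [hc, hu 0, h0]
        simp [h0i, h1i]
      | false =>
        have hc : (fun j => ρ j i) = fun j => ts j 2 := by
          funext j
          simp [hρdef, h2i, h1i, h0i, hts2 j]
        rw [hc, hu 2, h23.1]
        simp [h0i]
end

section
/- The 6-ary Boolean relation R = { (x₁,x₂,x₃,x₄,c₀,c₁) ∈ Bool⁶ | (x₁ ∨ x₂) ∧ (x₃ = ¬x₁) ∧ (x₄ = ¬x₂) ∧ (c₀ = 0) ∧ (c₁ = 1) } = { (0,1,1,0,0,1), (1,0,0,1,0,1), (1,1,0,0,0,1) } is a weak base of the co-clone it generates (this co-clone is ID₂ in Post's lattice): for every finite set Δ of Boolean relations with Pol(Δ) = Pol({R}) one has pPol(Δ) ⊆ pPol({R}). -/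
namespace WB15

def t1 : Fin 6 → Bool := ![false, true, true, false, false, true]
def t2 : Fin 6 → Bool := ![true, false, false, true, false, true]
def t3 : Fin 6 → Bool := ![true, true, false, false, false, true]
def Rw : BRel 6 := { t | (t 0 = true ∨ t 1 = true) ∧ t 2 = ! t 0 ∧ t 3 = ! t 1 ∧
      t 4 = false ∧ t 5 = true }

lemma t1_mem : t1 ∈ Rw := ⟨Or.inr rfl, rfl, rfl, rfl, rfl⟩
lemma t2_mem : t2 ∈ Rw := ⟨Or.inl rfl, rfl, rfl, rfl, rfl⟩
lemma t3_mem : t3 ∈ Rw := ⟨Or.inl rfl, rfl, rfl, rfl, rfl⟩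

def maj3 (v : Fin 3 → Bool) : Bool := (v 0 && v 1) || ((v 1 && v 2) || (v 0 && v 2))

lemma maj3_pres : Preserves maj3 Rw := by
  intro ts h
  obtain ⟨o0, a0, b0, c0, d0⟩ := h 0
  obtain ⟨o1, a1, b1, c1, d1⟩ := h 1
  obtain ⟨o2, a2, b2, c2, d2⟩ := h 2
  simp only [Rw, Set.mem_setOf_eq, maj3, a0, a1, a2, b0, b1, b2, c0, c1, c2, d0, d1, d2]
  rcases Bool.dichotomy (ts 0 0) with h00 | h00 <;>
  rcases Bool.dichotomy (ts 1 0) with h10 | h10 <;>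
  rcases Bool.dichotomy (ts 2 0) with h20 | h20 <;>
  rcases Bool.dichotomy (ts 0 1) with h01 | h01 <;>
  rcases Bool.dichotomy (ts 1 1) with h11 | h11 <;>
  rcases Bool.dichotomy (ts 2 1) with h21 | h21 <;>
  simp_all

lemma not_pol {Δ : Set (Σ k, BRel k)} (hPol : Pol Δ = Pol {⟨6, Rw⟩}) {m : ℕ}
    (g : (Fin m → Bool) → Bool) (hg : ¬ Preserves g Rw) :
    ∃ S ∈ Δ, ∃ ts : Fin m → Fin S.1 → Bool,
      (∀ j, ts j ∈ S.2) ∧ (fun i => g fun j => ts j i) ∉ S.2 := by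
  by_contra h
  push_neg at h
  have hmem : (⟨m, g⟩ : Σ m, (Fin m → Bool) → Bool) ∈ Pol Δ := fun S hS ts hts => h S hS ts hts
  rw [hPol] at hmem
  exact hg (hmem ⟨6, Rw⟩ rfl)

lemma neg_fail : ¬ Preserves (fun v : Fin 1 → Bool => !(v 0)) Rw := by
  intro h
  have := h (fun _ => t1) (fun _ => t1_mem)
  simp [Rw, t1] at this

lemma c0_fail : ¬ Preserves (fun _ : Fin 1 → Bool => false) Rw := by
  intro h
  have := h (fun _ => t1) (fun _ => t1_mem)
  simp [Rw] at this

lemma c1_fail : ¬ Preserves (fun _ : Fin 1 → Bool => true) Rw := by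
  intro h
  have := h (fun _ => t1) (fun _ => t1_mem)
  simp [Rw] at this

lemma and_fail : ¬ Preserves (fun v : Fin 2 → Bool => v 0 && v 1) Rw := by
  intro h
  have := h ![t1, t2] (by intro j; fin_cases j <;> simp [t1_mem, t2_mem])
  simp [Rw, t1, t2] at this

lemma or_fail : ¬ Preserves (fun v : Fin 2 → Bool => v 0 || v 1) Rw := by
  intro h
  have := h ![t1, t2] (by intro j; fin_cases j <;> simp [t1_mem, t2_mem])
  simp [Rw, t1, t2] at this

def gop (v : Fin 3 → Bool) : Bool := cond (v 2) (v 0 || !(v 1)) (v 0 && !(v 1))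

lemma gop_fail : ¬ Preserves gop Rw := by
  intro h
  have := h ![t1, t3, t2] (by intro j; fin_cases j <;> simp [t1_mem, t2_mem, t3_mem])
  simp [Rw, gop, t1, t2, t3] at this

section main
variable {Δ : Set (Σ k, BRel k)} (hPol : Pol Δ = Pol {⟨6, Rw⟩})
  {m : ℕ} {f : (Fin m → Bool) → Option Bool} (hf : ∀ S ∈ Δ, PPreserves f S.2)

include hPol hf

lemma const_vals {v0 v1 : Bool}
    (h0 : f (fun _ => false) = some v0) (h1 : f (fun _ => true) = some v1) :
    v0 = false ∧ v1 = true := by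
  -- helper: apply f to constant columns over a single row t of S
  have key : ∀ S ∈ Δ, ∀ t ∈ S.2, (fun i => cond (t i) v1 v0) ∈ S.2 := by
    intro S hS t ht
    refine hf S hS (fun _ => t) (fun _ => ht) _ (fun i => ?_)
    rcases Bool.dichotomy (t i) with h | h
    · simpa [h] using h0
    · simpa [h] using h1
  rcases Bool.dichotomy v0 with hv0 | hv0 <;> rcases Bool.dichotomy v1 with hv1 | hv1
  · -- v0 = false, v1 = false : contradict constant-0
    obtain ⟨S, hS, ts, hts, hbad⟩ := not_pol hPol _ c0_fail
    exact absurd (by simpa [hv0, hv1, Bool.cond_self] using key S hS (ts 0) (hts 0)) hbad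
  · exact ⟨hv0, hv1⟩
  · -- v0 = true, v1 = false : contradict negation
    obtain ⟨S, hS, ts, hts, hbad⟩ := not_pol hPol _ neg_fail
    have := key S hS (ts 0) (hts 0)
    have hc : (fun i => cond (ts 0 i) v1 v0) = (fun i => !(ts 0 i)) := by
      funext i; rcases Bool.dichotomy (ts 0 i) with h | h <;> simp [h, hv0, hv1]
    rw [hc] at this
    exact absurd this hbad
  · -- v0 = true, v1 = true : contradict constant-1
    obtain ⟨S, hS, ts, hts, hbad⟩ := not_pol hPol _ c1_fail
    exact absurd (by simpa [hv0, hv1, Bool.cond_self] using key S hS (ts 0) (hts 0)) hbad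

lemma self_dual (h0 : f (fun _ => false) = some false) (h1 : f (fun _ => true) = some true)
    {x : Fin m → Bool} {p q : Bool}
    (hx : f x = some p) (hnx : f (fun j => !(x j)) = some q) : q = !p := by
  rcases Bool.dichotomy p with hp | hp <;> rcases Bool.dichotomy q with hq | hq <;>
    subst hp <;> subst hq
  · -- p = q = false : contradict ∧
    exfalso
    obtain ⟨S, hS, ts, hts, hbad⟩ := not_pol hPol _ and_fail
    apply hbad
    refine hf S hS (fun j i => cond (x j) (ts 0 i) (ts 1 i)) (fun j => ?_) _ (fun i => ?_)
    · rcases Bool.dichotomy (x j) with h | h <;> simp only [h, cond_true, cond_false]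
      · exact hts 1
      · exact hts 0
    · show f (fun j => cond (x j) (ts 0 i) (ts 1 i)) = some (ts 0 i && ts 1 i)
      rcases Bool.dichotomy (ts 0 i) with ha | ha <;>
        rcases Bool.dichotomy (ts 1 i) with hb | hb <;>
        simp only [ha, hb, Bool.and_false, Bool.false_and, Bool.and_true, Bool.and_self,
          Bool.cond_self]
      · exact h0
      · -- ts 0 i = false, ts 1 i = true : column = !x
        have : (fun j => cond (x j) false true) = (fun j => !(x j)) := by
          funext j; rcases Bool.dichotomy (x j) with h | h <;> simp [h]
        rw [this]; exact hnx
      · -- ts 0 i = true, ts 1 i = false : column = x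
        have : (fun j => cond (x j) true false) = x := by
          funext j; rcases Bool.dichotomy (x j) with h | h <;> simp [h]
        rw [this]; exact hx
      · exact h1
  · rfl
  · rfl
  · -- p = q = true : contradict ∨
    exfalso
    obtain ⟨S, hS, ts, hts, hbad⟩ := not_pol hPol _ or_fail
    apply hbad
    refine hf S hS (fun j i => cond (x j) (ts 0 i) (ts 1 i)) (fun j => ?_) _ (fun i => ?_)
    · rcases Bool.dichotomy (x j) with h | h <;> simp only [h, cond_true, cond_false]
      · exact hts 1
      · exact hts 0
    · show f (fun j => cond (x j) (ts 0 i) (ts 1 i)) = some (ts 0 i || ts 1 i)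
      rcases Bool.dichotomy (ts 0 i) with ha | ha <;>
        rcases Bool.dichotomy (ts 1 i) with hb | hb <;>
        simp only [ha, hb, Bool.or_false, Bool.false_or, Bool.or_true, Bool.or_self,
          Bool.cond_self]
      · exact h0
      · have : (fun j => cond (x j) false true) = (fun j => !(x j)) := by
          funext j; rcases Bool.dichotomy (x j) with h | h <;> simp [h]
        rw [this]; exact hnx
      · have : (fun j => cond (x j) true false) = x := by
          funext j; rcases Bool.dichotomy (x j) with h | h <;> simp [h]
        rw [this]; exact hx
      · exact h1

lemma or_lemma (h0 : f (fun _ => false) = some false) (h1 : f (fun _ => true) = some true)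
    {c b : Fin m → Bool} (hcb : ∀ j, c j = true → b j = true)
    (hc : f c = some true) (hb : f b = some false)
    (hnc : f (fun j => !(c j)) = some false) (hnb : f (fun j => !(b j)) = some true) :
    False := by
  obtain ⟨S, hS, ρ, hρ, hbad⟩ := not_pol hPol gop gop_fail
  have hmaj : (⟨3, maj3⟩ : Σ m, (Fin m → Bool) → Bool) ∈ Pol Δ := by
    rw [hPol]; intro T hT; rcases hT with rfl; exact maj3_pres
  have hmr : (fun i => maj3 fun j => ρ j i) ∈ S.2 := hmaj S hS ρ hρ
  apply hbad
  refine hf S hS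
    (fun j i => cond (c j) (ρ 2 i) (cond (b j) (maj3 fun j' => ρ j' i) (ρ 0 i)))
    (fun j => ?_) _ (fun i => ?_)
  · rcases Bool.dichotomy (c j) with h | h <;> rcases Bool.dichotomy (b j) with h' | h' <;>
      simp only [h, h', cond_true, cond_false]
    · exact hρ 0
    · exact hmr
    · exact hρ 2
    · exact hρ 2
  · show f (fun j => cond (c j) (ρ 2 i) (cond (b j) (maj3 fun j' => ρ j' i) (ρ 0 i)))
      = some (gop fun j => ρ j i)
    rcases Bool.dichotomy (ρ 0 i) with hX | hX <;>
      rcases Bool.dichotomy (ρ 1 i) with hY | hY <;>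
      rcases Bool.dichotomy (ρ 2 i) with hZ | hZ
    all_goals
      have hm : (maj3 fun j' => ρ j' i) =
          ((ρ 0 i && ρ 1 i) || ((ρ 1 i && ρ 2 i) || (ρ 0 i && ρ 2 i))) := rfl
      rw [hX, hY, hZ] at hm
      have hg : (gop fun j => ρ j i) =
          cond (ρ 2 i) (ρ 0 i || !(ρ 1 i)) (ρ 0 i && !(ρ 1 i)) := rfl
      rw [hX, hY, hZ] at hg
      rw [hg]
      simp only [hX, hZ, hm, Bool.and_false, Bool.and_true, Bool.false_and, Bool.true_and,
        Bool.or_false, Bool.false_or, Bool.or_true, Bool.true_or, Bool.not_true,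
        Bool.not_false, Bool.cond_self, cond_true, cond_false]
    -- cases in order (ρ0,ρ1,ρ2) = (f,f,f),(f,f,t),(f,t,f),(f,t,t),(t,f,f),(t,f,t),(t,t,f),(t,t,t)
    · exact h0
    · -- column = c, value true
      have : (fun j => cond (c j) true false) = c := by
        funext j; rcases Bool.dichotomy (c j) with h | h <;> simp [h]
      rw [this]; exact hc
    · exact h0
    · -- column = b, value false
      have : (fun j => cond (c j) true (cond (b j) true false)) = b := by
        funext j
        rcases Bool.dichotomy (c j) with h | h
        · simp only [h, cond_false]
          rcases Bool.dichotomy (b j) with h' | h' <;> simp [h']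
        · simp [h, hcb j h]
      rw [this]; exact hb
    · -- column = !b, value true
      have : (fun j => cond (c j) false (cond (b j) false true)) = (fun j => !(b j)) := by
        funext j
        rcases Bool.dichotomy (c j) with h | h
        · simp only [h, cond_false]
          rcases Bool.dichotomy (b j) with h' | h' <;> simp [h']
        · simp [h, hcb j h]
      rw [this]; exact hnb
    · -- column = const true
      exact h1
    · -- column = !c, value false
      have : (fun j => cond (c j) false true) = (fun j => !(c j)) := by
        funext j; rcases Bool.dichotomy (c j) with h | h <;> simp [h]
      rw [this]; exact hnc
    · exact h1

end main

end WB15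

theorem stmt15 :
    IsWeakBase { t : Fin 6 → Bool |
      (t 0 = true ∨ t 1 = true) ∧ t 2 = ! t 0 ∧ t 3 = ! t 1 ∧
      t 4 = false ∧ t 5 = true } := by
  show IsWeakBase WB15.Rw
  intro Δ _hfin hPol f hf T hT ts hts u hu
  rcases hT with rfl
  have hf' : ∀ S ∈ Δ, PPreserves f.2 S.2 := hf
  have hor : ∀ j, ts j 0 = true ∨ ts j 1 = true := fun j => (hts j).1
  have h2 : ∀ j, ts j 2 = !(ts j 0) := fun j => (hts j).2.1
  have h3 : ∀ j, ts j 3 = !(ts j 1) := fun j => (hts j).2.2.1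
  have h4 : ∀ j, ts j 4 = false := fun j => (hts j).2.2.2.1
  have h5 : ∀ j, ts j 5 = true := fun j => (hts j).2.2.2.2
  have hfa := hu 0
  have hfb := hu 1
  have hfna : f.2 (fun j => !(ts j 0)) = some (u 2) := by
    have h := hu 2
    rwa [show (fun j => ts j 2) = fun j => !(ts j 0) from funext fun j => h2 j] at h
  have hfnb : f.2 (fun j => !(ts j 1)) = some (u 3) := by
    have h := hu 3
    rwa [show (fun j => ts j 3) = fun j => !(ts j 1) from funext fun j => h3 j] at h
  have hf0 : f.2 (fun _ => false) = some (u 4) := by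
    have h := hu 4
    rwa [show (fun j => ts j 4) = fun _ : Fin f.1 => false from funext fun j => h4 j] at h
  have hf1 : f.2 (fun _ => true) = some (u 5) := by
    have h := hu 5
    rwa [show (fun j => ts j 5) = fun _ : Fin f.1 => true from funext fun j => h5 j] at h
  obtain ⟨e4, e5⟩ := WB15.const_vals hPol hf' hf0 hf1
  rw [e4] at hf0
  rw [e5] at hf1
  have e2 : u 2 = !(u 0) := WB15.self_dual hPol hf' hf0 hf1 hfa hfna
  have e3 : u 3 = !(u 1) := WB15.self_dual hPol hf' hf0 hf1 hfb hfnb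
  refine ⟨?_, e2, e3, e4, e5⟩
  by_contra hcon
  push_neg at hcon
  obtain ⟨hu0, hu1⟩ := hcon
  simp only [ne_eq, Bool.not_eq_true] at hu0 hu1
  refine WB15.or_lemma hPol hf' hf0 hf1
    (c := fun j => !(ts j 0)) (b := fun j => ts j 1) (fun j hj => ?_) ?_ ?_ ?_ ?_
  · have hj' : (!(ts j 0)) = true := hj
    rcases hor j with h | h
    · rw [h] at hj'; exact absurd hj' (by simp)
    · exact h
  · rw [hfna, e2, hu0]; rfl
  · rw [hfb, hu1]
  · have : (fun j => !(!(ts j 0))) = fun j => ts j 0 := funext fun j => Bool.not_not _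
    rw [this, hfa, hu0]
  · rw [hfnb, e3, hu1]; rfl
end

section
/- The 4-ary Boolean parity relation EVEN⁴ = { (x₁,x₂,x₃,x₄) ∈ Bool⁴ | x₁ ⊕ x₂ ⊕ x₃ ⊕ x₄ = 0 } (the tuples with an even number of coordinates equal to 1) is a weak base of the co-clone it generates (this co-clone is IL in Post's lattice): for every finite set Δ of Boolean relations with Pol(Δ) = Pol({EVEN⁴}) one has pPol(Δ) ⊆ pPol({EVEN⁴}). -/
/-- Key combinatorial fact: any binary function obtained from a tuple of
`EVEN⁴` by table lookup is affine and hence preserves `EVEN⁴`. -/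
lemma even4_key : ∀ (t0 t1 t2 t3 p0 p1 p2 p3 q0 q1 q2 q3 : Bool),
    Bool.xor t0 (Bool.xor t1 (Bool.xor t2 t3)) = false →
    Bool.xor p0 (Bool.xor p1 (Bool.xor p2 p3)) = false →
    Bool.xor q0 (Bool.xor q1 (Bool.xor q2 q3)) = false →
    Bool.xor (cond p0 (cond q0 t3 t2) (cond q0 t1 t0))
      (Bool.xor (cond p1 (cond q1 t3 t2) (cond q1 t1 t0))
        (Bool.xor (cond p2 (cond q2 t3 t2) (cond q2 t1 t0))
          (cond p3 (cond q3 t3 t2) (cond q3 t1 t0)))) = false := by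
  decide

theorem stmt16 :
    IsWeakBase { t : Fin 4 → Bool |
      Bool.xor (t 0) (Bool.xor (t 1) (Bool.xor (t 2) (t 3))) = false } := by
  set R : BRel 4 := { t : Fin 4 → Bool |
      Bool.xor (t 0) (Bool.xor (t 1) (Bool.xor (t 2) (t 3))) = false } with hR
  intro Δ _ hpol f hf S hS
  simp only [Set.mem_singleton_iff] at hS
  subst hS
  intro ts hts u hu
  -- index lookup in Fin 4
  set idx : Bool → Bool → Fin 4 := fun a b => cond a (cond b 3 2) (cond b 1 0) with hidx
  -- the two "generic rows"
  set r1 : Fin 4 → Bool := ![false, false, true, true] with hr1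
  set r2 : Fin 4 → Bool := ![false, true, false, true] with hr2
  -- table-lookup binary functions associated to each argument tuple
  set G : Fin f.1 → Bool → Bool → Bool :=
    fun j a b => cond a (cond b (ts j 3) (ts j 2)) (cond b (ts j 1) (ts j 0)) with hGdef
  -- each G j preserves R
  have hG : ∀ j, Preserves (fun v : Fin 2 → Bool => G j (v 0) (v 1)) R := by
    intro j ps hps
    exact even4_key (ts j 0) (ts j 1) (ts j 2) (ts j 3)
      (ps 0 0) (ps 0 1) (ps 0 2) (ps 0 3) (ps 1 0) (ps 1 1) (ps 1 2) (ps 1 3)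
      (hts j) (hps 0) (hps 1)
  -- hence each G j is a polymorphism of Δ
  have hGΔ : ∀ j, (⟨2, fun v : Fin 2 → Bool => G j (v 0) (v 1)⟩ :
      Σ m, (Fin m → Bool) → Bool) ∈ Pol Δ := by
    intro j
    rw [hpol]
    intro S hS
    simp only [Set.mem_singleton_iff] at hS
    subst hS
    exact hG j
  -- f is defined on all columns of the G-matrix
  have hfG : ∀ a b : Bool, f.2 (fun j => G j a b) = some (u (idx a b)) := by
    intro a b
    have h := hu (idx a b)
    have he : (fun j => ts j (idx a b)) = fun j => G j a b := by
      funext j; cases a <;> cases b <;> rfl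
    rw [he] at h
    exact h
  -- the resulting total binary function
  set h' : (Fin 2 → Bool) → Bool := fun v => u (idx (v 0) (v 1)) with hh'
  have h'Δ : (⟨2, h'⟩ : Σ m, (Fin m → Bool) → Bool) ∈ Pol Δ := by
    intro S hS ps hps
    have hts' : ∀ j, (fun i => G j (ps 0 i) (ps 1 i)) ∈ S.2 := by
      intro j
      exact hGΔ j S hS ps hps
    exact hf S hS (fun j i => G j (ps 0 i) (ps 1 i)) hts'
      (fun i => h' (fun j => ps j i)) (fun i => hfG (ps 0 i) (ps 1 i))
  have h'R : Preserves h' R := by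
    rw [hpol] at h'Δ
    exact h'Δ ⟨4, R⟩ rfl
  have hrows : ∀ j : Fin 2, (![r1, r2] j) ∈ R := by
    intro j
    fin_cases j <;> rfl
  have hfin := h'R ![r1, r2] hrows
  have hconv : (fun i => h' (fun j => ![r1, r2] j i)) = u := by
    funext i
    fin_cases i <;> rfl
  rw [hconv] at hfin
  exact hfin
end

section
/- The 8-ary Boolean relation R = { (x₁,x₂,x₃,x₄,x₅,x₆,c₀,c₁) ∈ Bool⁸ | (x₁ ⊕ x₂ ⊕ x₃ = 0) ∧ (x₄ = ¬x₁) ∧ (x₅ = ¬x₂) ∧ (x₆ = ¬x₃) ∧ (c₀ = 0) ∧ (c₁ = 1) } is a weak base of the co-clone it generates (this co-clone is IL₂ in Post's lattice): for every finite set Δ of Boolean relations with Pol(Δ) = Pol({R}) one has pPol(Δ) ⊆ pPol({R}). -/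
def gfun : Fin 8 → Bool → Bool → Bool
  | 0, a, _ => a
  | 1, _, b => b
  | 2, a, b => Bool.xor a b
  | 3, a, _ => !a
  | 4, _, b => !b
  | 5, a, b => !(Bool.xor a b)
  | 6, _, _ => false
  | 7, _, _ => true

def indf : Bool → Bool → Bool → Fin 8
  | false, false, false => 6
  | false, false, true => 0
  | false, true, false => 1
  | false, true, true => 2
  | true, false, false => 5
  | true, false, true => 4
  | true, true, false => 3
  | true, true, true => 7

lemma indf_gfun : ∀ i : Fin 8,
    indf (gfun i false false) (gfun i false true) (gfun i true false) = i := by decide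

lemma gfun_indf : ∀ z1 z2 z3 a b : Bool,
    gfun (indf z1 z2 z3) a b =
      (match a, b with
       | false, false => z1
       | false, true => z2
       | true, false => z3
       | true, true => Bool.xor z1 (Bool.xor z2 z3)) := by decide

theorem stmt17 :
    IsWeakBase { t : Fin 8 → Bool |
      Bool.xor (t 0) (Bool.xor (t 1) (t 2)) = false ∧
      t 3 = ! t 0 ∧ t 4 = ! t 1 ∧ t 5 = ! t 2 ∧
      t 6 = false ∧ t 7 = true } := by
  set R : BRel 8 := { t : Fin 8 → Bool |
      Bool.xor (t 0) (Bool.xor (t 1) (t 2)) = false ∧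
      t 3 = ! t 0 ∧ t 4 = ! t 1 ∧ t 5 = ! t 2 ∧
      t 6 = false ∧ t 7 = true } with hR
  intro Δ hfin hpol F hF
  obtain ⟨m, f⟩ := F
  intro S hS
  rw [Set.mem_singleton_iff] at hS
  subst hS
  intro ts hts u hu
  -- every row of ts is gfun-form
  have hcol : ∀ j i, ts j i = gfun i (ts j 0) (ts j 1) := by
    intro j i
    obtain ⟨h1, h2, h3, h4, h5, h6⟩ := hts j
    have h2' : ts j 2 = Bool.xor (ts j 0) (ts j 1) := by
      revert h1
      cases ts j 0 <;> cases ts j 1 <;> cases ts j 2 <;> simp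
    fin_cases i <;> simp [gfun, h2', h2, h3, h4, h5, h6]
  -- the total ternary function built from u
  set Φ : (Fin 3 → Bool) → Bool := fun v => u (indf (v 0) (v 1) (v 2)) with hΦ
  -- minority is a polymorphism of R
  have hminR : (⟨3, fun v : Fin 3 → Bool => Bool.xor (v 0) (Bool.xor (v 1) (v 2))⟩ :
      Σ m, (Fin m → Bool) → Bool) ∈ Pol {⟨8, R⟩} := by
    rintro ⟨k', D⟩ hD ts' hts'
    rw [Set.mem_singleton_iff] at hD
    cases hD
    obtain ⟨a1, b1, c1, d1, e1, f1⟩ := hts' 0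
    obtain ⟨a2, b2, c2, d2, e2, f2⟩ := hts' 1
    obtain ⟨a3, b3, c3, d3, e3, f3⟩ := hts' 2
    refine ⟨?_, ?_, ?_, ?_, ?_, ?_⟩ <;>
      simp only [b1, b2, b3, c1, c2, c3, d1, d2, d3, e1, e2, e3, f1, f2, f3] <;>
      [skip; skip; skip; skip; rfl; rfl]
    · revert a1 a2 a3
      cases ts' 0 0 <;> cases ts' 0 1 <;> cases ts' 0 2 <;>
      cases ts' 1 0 <;> cases ts' 1 1 <;> cases ts' 1 2 <;>
      cases ts' 2 0 <;> cases ts' 2 1 <;> cases ts' 2 2 <;> decide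
    · cases ts' 0 0 <;> cases ts' 1 0 <;> cases ts' 2 0 <;> rfl
    · cases ts' 0 1 <;> cases ts' 1 1 <;> cases ts' 2 1 <;> rfl
    · cases ts' 0 2 <;> cases ts' 1 2 <;> cases ts' 2 2 <;> rfl
  -- Φ is a polymorphism of Δ
  have hΦΔ : (⟨3, Φ⟩ : Σ m, (Fin m → Bool) → Bool) ∈ Pol Δ := by
    rintro ⟨k', D⟩ hD rs hrs
    have hmin : (⟨3, fun v : Fin 3 → Bool => Bool.xor (v 0) (Bool.xor (v 1) (v 2))⟩ :
        Σ m, (Fin m → Bool) → Bool) ∈ Pol Δ := by rw [hpol]; exact hminR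
    have hr4 : (fun i => Bool.xor (rs 0 i) (Bool.xor (rs 1 i) (rs 2 i))) ∈ D :=
      hmin ⟨k', D⟩ hD rs hrs
    have hfD := hF ⟨k', D⟩ hD
    set σ : Fin k' → Fin 8 := fun i => indf (rs 0 i) (rs 1 i) (rs 2 i) with hσ
    set ts' : Fin m → Fin k' → Bool := fun j i => gfun (σ i) (ts j 0) (ts j 1) with hts'def
    have hts' : ∀ j, ts' j ∈ D := by
      intro j
      have key : ∀ i, ts' j i =
          (match ts j 0, ts j 1 with
           | false, false => rs 0 i
           | false, true => rs 1 i
           | true, false => rs 2 i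
           | true, true => Bool.xor (rs 0 i) (Bool.xor (rs 1 i) (rs 2 i))) := by
        intro i
        exact gfun_indf (rs 0 i) (rs 1 i) (rs 2 i) (ts j 0) (ts j 1)
      cases h0 : ts j 0 <;> cases h1 : ts j 1
      · have : ts' j = rs 0 := funext fun i => by rw [key i, h0, h1]
        rw [this]; exact hrs 0
      · have : ts' j = rs 1 := funext fun i => by rw [key i, h0, h1]
        rw [this]; exact hrs 1
      · have : ts' j = rs 2 := funext fun i => by rw [key i, h0, h1]
        rw [this]; exact hrs 2
      · have : ts' j = fun i => Bool.xor (rs 0 i) (Bool.xor (rs 1 i) (rs 2 i)) :=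
          funext fun i => by rw [key i, h0, h1]
        rw [this]; exact hr4
    refine hfD ts' hts' (fun i => Φ (fun l => rs l i)) ?_
    intro i
    have hcoleq : (fun j => ts' j i) = (fun j => ts j (σ i)) :=
      funext fun j => (hcol j (σ i)).symm
    rw [hcoleq]
    exact hu (σ i)
  -- hence Φ preserves R
  have hΦR : Preserves Φ R := by
    have : (⟨3, Φ⟩ : Σ m, (Fin m → Bool) → Bool) ∈ Pol {⟨8, R⟩} := hpol ▸ hΦΔ
    exact this ⟨8, R⟩ rfl
  -- apply Φ to three rows of R
  set ts0 : Fin 3 → Fin 8 → Bool := fun l =>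
    match l with
    | 0 => fun i => gfun i false false
    | 1 => fun i => gfun i false true
    | 2 => fun i => gfun i true false with hts0
  have hrows : ∀ l, ts0 l ∈ R := by
    intro l
    fin_cases l <;> exact ⟨rfl, rfl, rfl, rfl, rfl, rfl⟩
  have hres := hΦR ts0 hrows
  have : (fun i => Φ (fun l => ts0 l i)) = u := by
    funext i
    show u (indf (ts0 0 i) (ts0 1 i) (ts0 2 i)) = u i
    show u (indf (gfun i false false) (gfun i false true) (gfun i true false)) = u i
    rw [indf_gfun]
  rwa [this] at hres
end

section
/- The 5-ary Boolean relation R = { (x₁,x₂,x₃,c₀,c₁) ∈ Bool⁵ | (x₁ ↔ x₂ ∧ x₃) ∧ (c₀ = 0) ∧ (c₁ = 1) } = { (0,0,0,0,1), (0,0,1,0,1), (0,1,0,0,1), (1,1,1,0,1) } is a weak base of the co-clone it generates (this co-clone is IE₂ in Post's lattice): for every finite set Δ of Boolean relations with Pol(Δ) = Pol({R}) one has pPol(Δ) ⊆ pPol({R}). -/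
namespace Stmt18Aux

/-- The four tuples of `R`, as rows of a `4 × 5` matrix. -/
def wrow : Fin 4 → Fin 5 → Bool :=
  ![![false, false, false, false, true],
    ![false, false, true , false, true],
    ![false, true , false, false, true],
    ![true , true , true , false, true]]

/-- A retraction of `Bool⁴` onto the five columns of `wrow`. -/
def wphi (v : Fin 4 → Bool) : Fin 5 :=
  if v 3 then (if v 1 then (if v 2 then 4 else 2) else (if v 2 then 1 else 0)) else 3

/-- The coordinates of the retraction, as conjunction operations. -/
def wh (r : Fin 4) (v : Fin 4 → Bool) : Bool :=
  match r with
  | ⟨0, _⟩ => v 1 && v 2 && v 3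
  | ⟨1, _⟩ => v 1 && v 3
  | ⟨2, _⟩ => v 2 && v 3
  | ⟨3, _⟩ => v 3

lemma key1 : ∀ (r : Fin 4) (v : Fin 4 → Bool), wrow r (wphi v) = wh r v := by decide

lemma key2 : ∀ t : Fin 5 → Bool, t 0 = (t 1 && t 2) → t 3 = false → t 4 = true →
    ∃ r : Fin 4, t = wrow r := by decide

lemma key3 : ∀ i : Fin 5, wphi (fun r => wrow r i) = i := by decide

lemma key4 : ∀ r : Fin 4,
    (wrow r 0 = (wrow r 1 && wrow r 2)) ∧ wrow r 3 = false ∧ wrow r 4 = true := by decide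

lemma bool6 : ∀ a b c d e g : Bool,
    (((a && b) && (c && d)) && (e && g)) = (((a && c) && e) && ((b && d) && g)) := by decide

lemma bool4 : ∀ a b c d : Bool, ((a && b) && (c && d)) = ((a && c) && (b && d)) := by decide

/-- Each `wh r` preserves the relation `R`. -/
lemma wh_pres (r : Fin 4) :
    Preserves (wh r)
      { t : Fin 5 → Bool | (t 0 = (t 1 && t 2)) ∧ t 3 = false ∧ t 4 = true } := by
  intro ts hts
  obtain ⟨e10, e13, e14⟩ := hts 1
  obtain ⟨e20, e23, e24⟩ := hts 2
  obtain ⟨e30, e33, e34⟩ := hts 3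
  fin_cases r
  · refine ⟨?_, ?_, ?_⟩
    · show (ts 1 0 && ts 2 0 && ts 3 0) = _
      rw [e10, e20, e30]; exact bool6 _ _ _ _ _ _
    · show (ts 1 3 && ts 2 3 && ts 3 3) = false
      rw [e13, e23, e33]; rfl
    · show (ts 1 4 && ts 2 4 && ts 3 4) = true
      rw [e14, e24, e34]; rfl
  · refine ⟨?_, ?_, ?_⟩
    · show (ts 1 0 && ts 3 0) = _
      rw [e10, e30]; exact bool4 _ _ _ _
    · show (ts 1 3 && ts 3 3) = false
      rw [e13, e33]; rfl
    · show (ts 1 4 && ts 3 4) = true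
      rw [e14, e34]; rfl
  · refine ⟨?_, ?_, ?_⟩
    · show (ts 2 0 && ts 3 0) = _
      rw [e20, e30]; exact bool4 _ _ _ _
    · show (ts 2 3 && ts 3 3) = false
      rw [e23, e33]; rfl
    · show (ts 2 4 && ts 3 4) = true
      rw [e24, e34]; rfl
  · exact ⟨e30, e33, e34⟩

end Stmt18Aux

open Stmt18Aux in
theorem stmt18 :
    IsWeakBase { t : Fin 5 → Bool |
      (t 0 = (t 1 && t 2)) ∧ t 3 = false ∧ t 4 = true } := by
  intro Δ _hfin hPol f hf R' hR'
  simp only [Set.mem_singleton_iff] at hR'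
  subst hR'
  intro ts hts u hu
  -- every `wh r` is a polymorphism of Δ
  have hwh : ∀ r : Fin 4, (⟨4, wh r⟩ : Σ m, (Fin m → Bool) → Bool) ∈ Pol Δ := by
    intro r
    rw [hPol]
    intro S hS
    simp only [Set.mem_singleton_iff] at hS
    subst hS
    exact wh_pres r
  -- the total operation `g v := u (wphi v)` is a polymorphism of Δ
  have hg : (⟨4, fun v => u (wphi v)⟩ : Σ m, (Fin m → Bool) → Bool) ∈ Pol Δ := by
    intro S hS ms hms
    have hN : ∀ j : Fin f.1, (fun l => ts j (wphi (fun r => ms r l))) ∈ S.2 := by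
      intro j
      obtain ⟨r, hr⟩ := key2 (ts j) (hts j).1 (hts j).2.1 (hts j).2.2
      have h1 := hwh r S hS ms hms
      have : (fun l => ts j (wphi (fun r' => ms r' l)))
          = fun l => wh r (fun r' => ms r' l) := by
        funext l
        rw [hr, key1]
      rw [this]
      exact h1
    exact hf S hS (fun j l => ts j (wphi (fun r => ms r l))) hN
      (fun l => u (wphi (fun r => ms r l)))
      (fun l => hu (wphi (fun r => ms r l)))
  rw [hPol] at hg
  have hpres : Preserves (fun v => u (wphi v))
      { t : Fin 5 → Bool | (t 0 = (t 1 && t 2)) ∧ t 3 = false ∧ t 4 = true } :=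
    hg ⟨5, _⟩ rfl
  have hmem := hpres wrow (fun r => key4 r)
  have hu' : u = fun i => u (wphi (fun r => wrow r i)) :=
    funext fun i => (congrArg u (key3 i)).symm
  rw [hu']
  exact hmem
end

section
/- Let R = { (0,0,0,0,1), (0,0,1,0,1), (0,1,0,0,1), (1,1,1,0,1) } ⊆ Bool⁵ (the relation (x₁ ↔ x₂ ∧ x₃) ∧ (c₀ = 0) ∧ (c₁ = 1)). Then R is minimal in the sense that no proper nonempty subset of R generates the same co-clone: for every R' with ∅ ≠ R' ⊊ R, Pol({R'}) ≠ Pol({R}). -/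
abbrev P19 (t : Fin 5 → Bool) : Prop := (t 0 = (t 1 && t 2)) ∧ t 3 = false ∧ t 4 = true

def V19 : Fin 4 → Fin 5 → Bool :=
  ![![false,false,false,false,true],
    ![false,false,true,false,true],
    ![false,true,false,false,true],
    ![true,true,true,false,true]]

def maj19 : (Fin 3 → Bool) → Bool := fun v => (v 0 && v 1) || (v 0 && v 2) || (v 1 && v 2)
def and19 : (Fin 2 → Bool) → Bool := fun v => v 0 && v 1

lemma L1_s19 : ∀ t : Fin 5 → Bool, P19 t → ∃ p : Fin 4, t = V19 p := by decide

lemma L2 : ∀ p q r : Fin 4,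
    ((fun i => maj19 (fun j => ![V19 p, V19 q, V19 r] j i)) = V19 p ∨
     (fun i => maj19 (fun j => ![V19 p, V19 q, V19 r] j i)) = V19 q ∨
     (fun i => maj19 (fun j => ![V19 p, V19 q, V19 r] j i)) = V19 r) ∨
    ((p = 1 ∨ q = 1 ∨ r = 1) ∧ (p = 2 ∨ q = 2 ∨ r = 2) ∧ (p = 3 ∨ q = 3 ∨ r = 3)) := by
  decide

lemma L3 : ∀ j : Fin 3, P19 (![V19 1, V19 2, V19 3] j) := by decide
lemma L4 : ¬ P19 (fun i => maj19 (fun j => ![V19 1, V19 2, V19 3] j i)) := by decide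
lemma L5 : ∀ p q : Fin 4, P19 (fun i => and19 (fun j => ![V19 p, V19 q] j i)) := by decide
lemma L6 : (fun i => and19 (fun j => ![V19 1, V19 2] j i)) = V19 0 := by decide

lemma bridge3 (ts : Fin 3 → Fin 5 → Bool) (p q r : Fin 4)
    (e0 : ts 0 = V19 p) (e1 : ts 1 = V19 q) (e2 : ts 2 = V19 r) :
    (fun i => maj19 (fun j => ts j i)) = (fun i => maj19 (fun j => ![V19 p, V19 q, V19 r] j i)) := by
  funext i; congr 1; funext j; fin_cases j <;> simp [e0, e1, e2]

lemma bridge2 (ts : Fin 2 → Fin 5 → Bool) (p q : Fin 4)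
    (e0 : ts 0 = V19 p) (e1 : ts 1 = V19 q) :
    (fun i => and19 (fun j => ts j i)) = (fun i => and19 (fun j => ![V19 p, V19 q] j i)) := by
  funext i; congr 1; funext j; fin_cases j <;> simp [e0, e1]

theorem stmt19 :
    ∀ R' : BRel 5,
      R'.Nonempty →
      R' ⊂ { t : Fin 5 → Bool | (t 0 = (t 1 && t 2)) ∧ t 3 = false ∧ t 4 = true } →
      Pol {⟨5, R'⟩} ≠
        Pol {⟨5, ({ t : Fin 5 → Bool |
          (t 0 = (t 1 && t 2)) ∧ t 3 = false ∧ t 4 = true } : BRel 5)⟩} := by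
  intro R' _hne hss heq
  have hsub : R' ⊆ { t : Fin 5 → Bool | P19 t } := hss.subset
  by_cases hbcd : V19 1 ∈ R' ∧ V19 2 ∈ R' ∧ V19 3 ∈ R'
  · -- R' contains b, c, d; since ∧ preserves the full relation, a ∈ R', so R' = full.
    have hand : (⟨2, and19⟩ : Σ m, (Fin m → Bool) → Bool) ∈
        Pol {⟨5, ({ t : Fin 5 → Bool | P19 t } : BRel 5)⟩} := by
      intro R hR
      rw [Set.mem_singleton_iff] at hR; subst hR
      intro ts hts
      obtain ⟨p, e0⟩ := L1_s19 _ (hts 0)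
      obtain ⟨q, e1⟩ := L1_s19 _ (hts 1)
      show P19 (fun i => and19 (fun j => ts j i))
      rw [bridge2 ts p q e0 e1]
      exact L5 p q
    rw [← heq] at hand
    have hpres : Preserves and19 R' := hand ⟨5, R'⟩ rfl
    have hta : V19 0 ∈ R' := by
      have h := hpres ![V19 1, V19 2] (by
        intro j; fin_cases j
        · exact hbcd.1
        · exact hbcd.2.1)
      rwa [L6] at h
    apply hss.2
    intro t ht
    obtain ⟨p, rfl⟩ := L1_s19 t ht
    fin_cases p
    exacts [hta, hbcd.1, hbcd.2.1, hbcd.2.2]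
  · -- some of b, c, d is missing; then majority preserves R' but not the full relation.
    have hmaj : (⟨3, maj19⟩ : Σ m, (Fin m → Bool) → Bool) ∈ Pol {⟨5, R'⟩} := by
      intro R hR
      rw [Set.mem_singleton_iff] at hR; subst hR
      intro ts hts
      obtain ⟨p, e0⟩ := L1_s19 _ (hsub (hts 0))
      obtain ⟨q, e1⟩ := L1_s19 _ (hsub (hts 1))
      obtain ⟨r, e2⟩ := L1_s19 _ (hsub (hts 2))
      show (fun i => maj19 (fun j => ts j i)) ∈ R'
      rw [bridge3 ts p q r e0 e1 e2]
      rcases L2 p q r with (h | h | h) | ⟨h1, h2, h3⟩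
      · rw [h, ← e0]; exact hts 0
      · rw [h, ← e1]; exact hts 1
      · rw [h, ← e2]; exact hts 2
      · exfalso; apply hbcd
        refine ⟨?_, ?_, ?_⟩
        · rcases h1 with rfl | rfl | rfl
          · exact e0 ▸ hts 0
          · exact e1 ▸ hts 1
          · exact e2 ▸ hts 2
        · rcases h2 with rfl | rfl | rfl
          · exact e0 ▸ hts 0
          · exact e1 ▸ hts 1
          · exact e2 ▸ hts 2
        · rcases h3 with rfl | rfl | rfl
          · exact e0 ▸ hts 0
          · exact e1 ▸ hts 1
          · exact e2 ▸ hts 2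
    rw [heq] at hmaj
    have hp : Preserves maj19 ({ t : Fin 5 → Bool | P19 t } : BRel 5) :=
      hmaj ⟨5, _⟩ rfl
    have := hp ![V19 1, V19 2, V19 3] L3
    exact L4 this
end
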